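/- Let R = R(A,B,Z) be a bicolored rectangular family satisfying the standing assumptions with n = |A ∪ B|. Then every corner-free intersection subfamily K ⊆ R↓ satisfies |K| ≤ n·(1 + ⌊log₂ n⌋); in particular |K| = O(n log n). -/

import Mathlib

open scoped Classical

noncomputable section

abbrev Pt : Type := ℝ × ℝ
abbrev Rect : Type := Set Pt

def IsRect (R : Rect) : Prop := ∃ a b : Pt, a ≤ b ∧ R = Set.Icc a b

def Intersects (R S : Rect) : Prop := (R ∩ S).Nonempty

def IndepFamily (I : Set Rect) : Prop :=
  ∀ R ∈ I, ∀ S ∈ I, R ≠ S → R ∩ S = ∅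

def IsHittingSet (H : Set Pt) (C : Set Rect) : Prop :=
  ∀ R ∈ C, ∃ p ∈ H, p ∈ R

def mis (C : Set Rect) : ℕ :=
  sSup {n | ∃ I : Finset Rect, ↑I ⊆ C ∧ IndepFamily ↑I ∧ I.card = n}

def mhs (C : Set Rect) : ℕ :=
  sInf {n | ∃ H : Finset Pt, IsHittingSet ↑H C ∧ H.card = n}

def brf (A B : Finset Pt) (Z : Set Pt) : Set Rect :=
  {R | ∃ a ∈ A, ∃ b ∈ B, a ≤ b ∧ Set.Icc a b ⊆ Z ∧ R = Set.Icc a b}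

def Standing (A B : Finset Pt) (Z : Set Pt) : Prop :=
  (A ∩ B = ∅) ∧ (↑(A ∪ B) ⊆ Z) ∧
  (∀ p ∈ A ∪ B, ∃ i j : ℤ, 1 ≤ i ∧ i ≤ ((A ∪ B).card : ℤ) ∧ 1 ≤ j ∧ j ≤ ((A ∪ B).card : ℤ) ∧
    p = ((i : ℝ), (j : ℝ))) ∧
  (∀ p ∈ A ∪ B, ∀ q ∈ A ∪ B, p ≠ q → p.1 ≠ q.1 ∧ p.2 ≠ q.2)

def minRects (C : Set Rect) : Set Rect :=
  {R | R ∈ C ∧ ∀ S ∈ C, S ⊆ R → S = R}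

def IsRectCorner (p : Pt) (R : Rect) : Prop :=
  ∃ a b : Pt, a ≤ b ∧ R = Set.Icc a b ∧
    (p = a ∨ p = b ∨ p = (a.1, b.2) ∨ p = (b.1, a.2))

def CornerFree (R S : Rect) : Prop :=
  (∀ p, IsRectCorner p R → p ∉ interior S) ∧ (∀ p, IsRectCorner p S → p ∉ interior R)

def CFI (K : Set Rect) : Prop :=
  ∀ R ∈ K, ∀ S ∈ K, R ≠ S → CornerFree R S

def interGraph (K : Set Rect) : SimpleGraph K :=
  SimpleGraph.fromRel (fun R S => Intersects (R : Rect) (S : Rect))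

def IsComparabilityGraph {V : Type*} (G : SimpleGraph V) : Prop :=
  ∃ le : V → V → Prop, (∀ v, le v v) ∧
    (∀ u v w, le u v → le v w → le u w) ∧
    (∀ u v, le u v → le v u → u = v) ∧
    (∀ u v, G.Adj u v ↔ u ≠ v ∧ (le u v ∨ le v u))

def QSTAB (n : ℕ) (C : Finset Rect) : Set (Rect → ℝ) :=
  {x | (∀ R, 0 ≤ x R) ∧ (∀ R ∉ C, x R = 0) ∧
    ∀ i j : ℤ, 1 ≤ i → i ≤ (n : ℤ) → 1 ≤ j → j ≤ (n : ℤ) →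
      ∑ R ∈ C.filter (fun R => ((i : ℝ), (j : ℝ)) ∈ R), x R ≤ 1}

def misLP (n : ℕ) (C : Finset Rect) : ℝ :=
  sSup {s | ∃ x ∈ QSTAB n C, s = ∑ R ∈ C, x R}

def cliqueNum' {V : Type*} (G : SimpleGraph V) : ℕ :=
  sSup {n | ∃ s : Finset V, G.IsNClique n s}

def IsPerfect {V : Type*} (G : SimpleGraph V) : Prop :=
  ∀ S : Set V, (G.induce S).chromaticNumber = (cliqueNum' (G.induce S) : ℕ∞)

def rectArea (R : Rect) : ℝ :=
  (sSup (Prod.fst '' R) - sInf (Prod.fst '' R)) *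
  (sSup (Prod.snd '' R) - sInf (Prod.snd '' R))

def blCorner (R : Rect) : Pt := (sInf (Prod.fst '' R), sInf (Prod.snd '' R))
def trCorner (R : Rect) : Pt := (sSup (Prod.fst '' R), sSup (Prod.snd '' R))


/-- Natural-number width of a rectangle. -/
def natWidth (R : Rect) : ℕ := ⌊(trCorner R).1 - (blCorner R).1⌋₊

lemma blCorner_Icc {a b : Pt} (h : a ≤ b) : blCorner (Set.Icc a b) = a := by
  unfold blCorner
  rw [Set.Icc_prod_eq, Set.fst_image_prod _ (Set.nonempty_Icc.mpr h.2),
    Set.snd_image_prod (Set.nonempty_Icc.mpr h.1), csInf_Icc h.1, csInf_Icc h.2]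

lemma trCorner_Icc {a b : Pt} (h : a ≤ b) : trCorner (Set.Icc a b) = b := by
  unfold trCorner
  rw [Set.Icc_prod_eq, Set.fst_image_prod _ (Set.nonempty_Icc.mpr h.2),
    Set.snd_image_prod (Set.nonempty_Icc.mpr h.1), csSup_Icc h.1, csSup_Icc h.2]

/-- The geometric core: a "local width maximum" configuration violates corner-freeness. -/
lemma key_false {a b a' b' : Pt}
    (hab2 : a.2 < b.2)
    (ha'1 : a.1 < a'.1) (ha'2 : a'.2 < a.2)
    (hb'1 : b'.1 < b.1) (hb'2 : b.2 < b'.2)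
    (hx : a'.1 < b'.1)
    (hcf : CornerFree (Set.Icc a b') (Set.Icc a' b)) : False := by
  have hA'B : a' ≤ b := ⟨(hx.trans hb'1).le, (ha'2.trans hab2).le⟩
  have hcorner : IsRectCorner (a'.1, b.2) (Set.Icc a' b) :=
    ⟨a', b, hA'B, rfl, Or.inr (Or.inr (Or.inl rfl))⟩
  have hint : (a'.1, b.2) ∈ interior (Set.Icc a b') := by
    rw [Set.Icc_prod_eq, interior_prod_eq, interior_Icc, interior_Icc]
    exact ⟨⟨ha'1, hx⟩, ⟨hab2, hb'2⟩⟩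
  exact hcf.2 _ hcorner hint

/-- Every corner-free intersection subfamily K ⊆ R↓ of a BRF satisfying
the standing assumptions has |K| ≤ n·(1 + ⌊log₂ n⌋), where n = |A ∪ B|. -/
theorem cfi_card_bound (A B : Finset Pt) (Z : Set Pt) (hst : Standing A B Z)
    (K : Set Rect) (hK : K ⊆ minRects (brf A B Z)) (hcfi : CFI K) :
    K.ncard ≤ (A ∪ B).card * (1 + Nat.log 2 (A ∪ B).card) := by
  classical
  set n := (A ∪ B).card with hn
  have hdistinct := hst.2.2.2
  have hintc := hst.2.2.1
  -- extraction of data for each rectangle in K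
  have hmain : ∀ R ∈ K, ∃ (a b : Pt) (w : ℕ),
      a ∈ A ∧ b ∈ B ∧ a.1 < b.1 ∧ a.2 < b.2 ∧ R = Set.Icc a b ∧
      blCorner R = a ∧ trCorner R = b ∧
      1 ≤ w ∧ w ≤ n ∧ ((w : ℝ) = b.1 - a.1) ∧ natWidth R = w := by
    intro R hR
    obtain ⟨a, ha, b, hb, hab, hZ, rfl⟩ := (hK hR).1
    have hne : a ≠ b := by
      intro h
      subst h
      have : a ∈ A ∩ B := Finset.mem_inter.mpr ⟨ha, hb⟩
      rw [hst.1] at this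
      exact absurd this (Finset.notMem_empty a)
    have hd := hdistinct a (Finset.mem_union_left B ha) b (Finset.mem_union_right A hb) hne
    have h1 : a.1 < b.1 := lt_of_le_of_ne hab.1 hd.1
    have h2 : a.2 < b.2 := lt_of_le_of_ne hab.2 hd.2
    obtain ⟨i, j, hi1, hin, hj1, hjn, haij⟩ := hintc a (Finset.mem_union_left B ha)
    obtain ⟨i', j', hi'1, hi'n, hj'1, hj'n, hbij⟩ := hintc b (Finset.mem_union_right A hb)
    have ha1 : a.1 = (i : ℝ) := by rw [haij]
    have hb1 : b.1 = (i' : ℝ) := by rw [hbij]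
    have hii' : i < i' := by
      rw [ha1, hb1] at h1
      exact_mod_cast h1
    have h3 : ((i' - i).toNat : ℤ) = i' - i := Int.toNat_of_nonneg (by omega)
    have h4 : (((i' - i).toNat : ℤ) : ℝ) = (i' : ℝ) - (i : ℝ) := by
      rw [h3]; push_cast; ring
    have hwcast : (((i' - i).toNat : ℕ) : ℝ) = b.1 - a.1 := by
      rw [ha1, hb1, ← h4]; norm_cast
    refine ⟨a, b, (i' - i).toNat, ha, hb, h1, h2, rfl, blCorner_Icc hab, trCorner_Icc hab,
      by omega, by omega, hwcast, ?_⟩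
    unfold natWidth
    rw [blCorner_Icc hab, trCorner_Icc hab, ← hwcast, Nat.floor_natCast]
  -- the main combinatorial step : no local width-maximum within a dyadic class
  have hstep : ∀ R ∈ K, ∀ S ∈ K, ∀ S' ∈ K,
      trCorner S = trCorner R → blCorner S' = blCorner R →
      Nat.log 2 (natWidth S) = Nat.log 2 (natWidth R) →
      Nat.log 2 (natWidth S') = Nat.log 2 (natWidth R) →
      natWidth S < natWidth R → natWidth S' < natWidth R → False := by
    intro R hR S hS S' hS' htr hbl hclS hclS' hwS hwS'
    obtain ⟨a, b, w, haA, hbB, h1, h2, hReq, hRbl, hRtr, hw1, hwn, hwc, hwdef⟩ := hmain R hR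
    obtain ⟨aS, bS, wS, haSA, hbSB, hS1, hS2, hSeq, hSbl, hStr, hwS1, hwSn, hwSc, hwSdef⟩ :=
      hmain S hS
    obtain ⟨aP, bP, wP, haPA, hbPB, hP1, hP2, hPeq, hPbl, hPtr, hwP1, hwPn, hwPc, hwPdef⟩ :=
      hmain S' hS'
    -- identify shared corners
    have hbSb : bS = b := by rw [← hStr, htr, hRtr]
    have haPa : aP = a := by rw [← hPbl, hbl, hRbl]
    rw [hbSb] at hSeq hwSc
    rw [haPa] at hPeq hwPc hPbl
    rw [hwdef] at hwS hwS' hclS hclS'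
    rw [hwSdef] at hwS hclS
    rw [hwPdef] at hwS' hclS'
    -- aS is strictly to the right of a
    have haS1 : a.1 < aS.1 := by
      have hcast : (wS : ℝ) < (w : ℝ) := by exact_mod_cast hwS
      rw [hwSc, hwc] at hcast
      linarith
    -- bP is strictly to the left of b
    have hbP1 : bP.1 < b.1 := by
      have hcast : (wP : ℝ) < (w : ℝ) := by exact_mod_cast hwS'
      rw [hwPc, hwc] at hcast
      linarith
    -- no containment : S ⊄ R forces aS.2 < a.2
    have haS2 : aS.2 < a.2 := by
      by_contra hcon
      push_neg at hcon
      have hsub : S ⊆ R := by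
        rw [hSeq, hReq]
        exact Set.Icc_subset_Icc ⟨haS1.le, hcon⟩ le_rfl
      have hSR := (hK hR).2 S (hK hS).1 hsub
      have haSa : aS = a := by rw [← hSbl, hSR, hRbl]
      rw [haSa] at haS1
      exact absurd haS1 (lt_irrefl _)
    -- no containment : S' ⊄ R forces b.2 < bP.2
    have hbP2 : b.2 < bP.2 := by
      by_contra hcon
      push_neg at hcon
      have hsub : S' ⊆ R := by
        rw [hPeq, hReq]
        exact Set.Icc_subset_Icc le_rfl ⟨hbP1.le, hcon⟩
      have hPR := (hK hR).2 S' (hK hS').1 hsub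
      have hbPb : bP = b := by rw [← hPtr, hPR, hRtr]
      rw [hbPb] at hbP1
      exact absurd hbP1 (lt_irrefl _)
    -- dyadic class arithmetic : w < 2^(t+1) ≤ wS + wP
    have hx : aS.1 < bP.1 := by
      have h2w : w < 2 ^ (Nat.log 2 w + 1) := Nat.lt_pow_succ_log_self (by norm_num) w
      have hSlow : 2 ^ Nat.log 2 w ≤ wS := by
        calc 2 ^ Nat.log 2 w = 2 ^ Nat.log 2 wS := by rw [hclS]
        _ ≤ wS := Nat.pow_log_le_self 2 (by omega)
      have hPlow : 2 ^ Nat.log 2 w ≤ wP := by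
        calc 2 ^ Nat.log 2 w = 2 ^ Nat.log 2 wP := by rw [hclS']
        _ ≤ wP := Nat.pow_log_le_self 2 (by omega)
      have hsum : w < wS + wP := by
        have hpow : (2 : ℕ) ^ (Nat.log 2 w + 1) = 2 ^ Nat.log 2 w + 2 ^ Nat.log 2 w := by ring
        omega
      have hcast : (w : ℝ) < (wS : ℝ) + (wP : ℝ) := by exact_mod_cast hsum
      rw [hwc, hwSc, hwPc] at hcast
      linarith
    -- corner-freeness of S' and S is violated
    have hSS' : S' ≠ S := by
      intro h
      have haaS : a = aS := by rw [← hPbl, h, hSbl]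
      rw [← haaS] at haS1
      exact absurd haS1 (lt_irrefl _)
    have hcf : CornerFree S' S := hcfi S' hS' S hS hSS'
    rw [hPeq, hSeq] at hcf
    exact key_false h2 haS1 haS2 hbP1 hbP2 hx hcf
  -- the injection
  set L := Nat.log 2 n with hL
  set F : Rect → ℕ × Pt := fun R =>
    (Nat.log 2 (natWidth R),
      if ∀ T ∈ K, blCorner T = blCorner R →
          Nat.log 2 (natWidth T) = Nat.log 2 (natWidth R) → natWidth R ≤ natWidth T
        then blCorner R else trCorner R) with hF
  have hinj : Set.InjOn F K := by
    intro R hR S hS hFeq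
    obtain ⟨aR, bR, wR, haRA, hbRB, hR1, hR2, hReq, hRbl, hRtr, hwR1, hwRn, hwRc, hwRdef⟩ :=
      hmain R hR
    obtain ⟨aS, bS, wS, haSA, hbSB, hS1, hS2, hSeq, hSbl, hStr, hwS1, hwSn, hwSc, hwSdef⟩ :=
      hmain S hS
    simp only [hF, Prod.mk.injEq] at hFeq
    obtain ⟨hcls, hsnd⟩ := hFeq
    by_cases hcR : ∀ T ∈ K, blCorner T = blCorner R →
        Nat.log 2 (natWidth T) = Nat.log 2 (natWidth R) → natWidth R ≤ natWidth T <;>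
      by_cases hcS : ∀ T ∈ K, blCorner T = blCorner S →
        Nat.log 2 (natWidth T) = Nat.log 2 (natWidth S) → natWidth S ≤ natWidth T
    · rw [if_pos hcR, if_pos hcS] at hsnd
      have hle1 : natWidth R ≤ natWidth S := hcR S hS (by rw [hsnd]) hcls.symm
      have hle2 : natWidth S ≤ natWidth R := hcS R hR (by rw [hsnd]) hcls
      have haRS : aR = aS := by rw [← hRbl, hsnd, hSbl]
      have hweq : wR = wS := by rw [← hwRdef, ← hwSdef]; omega
      have hb1 : bR.1 = bS.1 := by
        have hcast : (wR : ℝ) = (wS : ℝ) := by exact_mod_cast hweq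
        rw [hwRc, hwSc, haRS] at hcast
        linarith
      have hbRS : bR = bS := by
        by_contra hne
        exact (hdistinct bR (Finset.mem_union_right A hbRB) bS
          (Finset.mem_union_right A hbSB) hne).1 hb1
      rw [hReq, hSeq, haRS, hbRS]
    · rw [if_pos hcR, if_neg hcS] at hsnd
      exfalso
      have haRbS : aR = bS := by rw [← hRbl, hsnd, hStr]
      have hmem : aR ∈ A ∩ B := Finset.mem_inter.mpr ⟨haRA, haRbS ▸ hbSB⟩
      rw [hst.1] at hmem
      exact absurd hmem (Finset.notMem_empty aR)
    · rw [if_neg hcR, if_pos hcS] at hsnd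
      exfalso
      have haSbR : aS = bR := by rw [← hSbl, ← hsnd, hRtr]
      have hmem : aS ∈ A ∩ B := Finset.mem_inter.mpr ⟨haSA, haSbR ▸ hbRB⟩
      rw [hst.1] at hmem
      exact absurd hmem (Finset.notMem_empty aS)
    · rw [if_neg hcR, if_neg hcS] at hsnd
      -- hsnd : trCorner R = trCorner S
      have hbRS : bR = bS := by rw [← hRtr, hsnd, hStr]
      rcases lt_trichotomy (natWidth S) (natWidth R) with hlt | heq | hgt
      · exfalso
        push_neg at hcR
        obtain ⟨T, hT, hTbl, hTcl, hTlt⟩ := hcR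
        exact hstep R hR S hS T hT (by rw [hsnd]) hTbl hcls.symm hTcl hlt hTlt
      · have hweq : wR = wS := by rw [← hwRdef, ← hwSdef, heq]
        have ha1 : aR.1 = aS.1 := by
          have hcast : (wR : ℝ) = (wS : ℝ) := by exact_mod_cast hweq
          rw [hwRc, hwSc, hbRS] at hcast
          linarith
        have haRS : aR = aS := by
          by_contra hne
          exact (hdistinct aR (Finset.mem_union_left B haRA) aS
            (Finset.mem_union_left B haSA) hne).1 ha1
        rw [hReq, hSeq, haRS, hbRS]
      · exfalso
        push_neg at hcS
        obtain ⟨T, hT, hTbl, hTcl, hTlt⟩ := hcS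
        exact hstep S hS R hR T hT (by rw [hsnd]) hTbl hcls hTcl hgt hTlt
  have himg : F '' K ⊆ ↑((Finset.range (1 + L)) ×ˢ (A ∪ B)) := by
    rintro _ ⟨R, hR, rfl⟩
    obtain ⟨aR, bR, wR, haRA, hbRB, hR1, hR2, hReq, hRbl, hRtr, hwR1, hwRn, hwRc, hwRdef⟩ :=
      hmain R hR
    rw [hF]
    simp only [Finset.coe_product, Set.mem_prod, Finset.mem_coe, Finset.mem_range]
    constructor
    · have hlog : Nat.log 2 (natWidth R) ≤ L := by
        rw [hwRdef, hL]
        exact Nat.log_mono_right hwRn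
      omega
    · split_ifs
      · rw [hRbl]; exact Finset.mem_union_left B haRA
      · rw [hRtr]; exact Finset.mem_union_right A hbRB
  have hfinT : (((Finset.range (1 + L)) ×ˢ (A ∪ B) : Finset (ℕ × Pt)) : Set (ℕ × Pt)).Finite :=
    (Finset.range (1 + L) ×ˢ (A ∪ B)).finite_toSet
  calc K.ncard = (F '' K).ncard := (Set.ncard_image_of_injOn hinj).symm
    _ ≤ (((Finset.range (1 + L)) ×ˢ (A ∪ B) : Finset (ℕ × Pt)) : Set (ℕ × Pt)).ncard :=
        Set.ncard_le_ncard himg hfinT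
    _ = (1 + L) * n := by
        rw [Set.ncard_coe_finset, Finset.card_product, Finset.card_range]
    _ = n * (1 + L) := mul_comm _ _
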